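/- Let μ = (μ₁,...,μ_r) be a system of measures with all moments finite such that the multi-indices n and n + e_j are both normal, with type II polynomials P_n and P_{n+e_j}. Then for z₀ ∈ ℂ, the Wronskian W(P_{n+e_j}, P_n; z₀) = P_{n+e_j}(z₀)P_n'(z₀) − P_{n+e_j}'(z₀)P_n(z₀) vanishes if and only if the index n is not normal for the doubly transformed system ((x−z₀)²μ₁,...,(x−z₀)²μ_r). -/

import Mathlib

open Polynomial MeasureTheory

/-- `P` is a type II multiple orthogonal polynomial at multi-index `n` for the system of
(possibly complex) measures `w j dμ j`. -/
def IsTypeII {r : ℕ} (μ : Fin r → Measure ℝ) (w : Fin r → ℝ → ℂ) (n : Fin r → ℕ)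
    (P : Polynomial ℂ) : Prop :=
  P.Monic ∧ P.natDegree = ∑ j, n j ∧
    ∀ j, ∀ k < n j, ∫ x : ℝ, P.eval (x : ℂ) * (x : ℂ) ^ k * w j x ∂(μ j) = 0

/-- The index `n` is normal: the type II polynomial exists and is unique. -/
def NormalII {r : ℕ} (μ : Fin r → Measure ℝ) (w : Fin r → ℝ → ℂ) (n : Fin r → ℕ) : Prop :=
  ∃! P : Polynomial ℂ, IsTypeII μ w n P



noncomputable def Lint (ν : Measure ℝ) (S : Polynomial ℂ) : ℂ := ∫ x : ℝ, S.eval (x : ℂ) ∂ν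

lemma integrable_eval (ν : Measure ℝ) (h : ∀ k : ℕ, Integrable (fun x : ℝ => x ^ k) ν)
    (S : Polynomial ℂ) : Integrable (fun x : ℝ => S.eval (x : ℂ)) ν := by
  have he : (fun x : ℝ => S.eval (x : ℂ)) =
      fun x : ℝ => ∑ i ∈ Finset.range (S.natDegree + 1), S.coeff i * ((x ^ i : ℝ) : ℂ) := by
    funext x
    rw [Polynomial.eval_eq_sum_range]
    push_cast
    ring
  rw [he]
  exact integrable_finset_sum _ fun i _ => ((h i).ofReal).const_mul _

lemma Lint_add (ν : Measure ℝ) (h : ∀ k : ℕ, Integrable (fun x : ℝ => x ^ k) ν)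
    (S T : Polynomial ℂ) : Lint ν (S + T) = Lint ν S + Lint ν T := by
  unfold Lint
  simp only [Polynomial.eval_add]
  exact integral_add (integrable_eval ν h S) (integrable_eval ν h T)

lemma Lint_sub (ν : Measure ℝ) (h : ∀ k : ℕ, Integrable (fun x : ℝ => x ^ k) ν)
    (S T : Polynomial ℂ) : Lint ν (S - T) = Lint ν S - Lint ν T := by
  unfold Lint
  simp only [Polynomial.eval_sub]
  exact integral_sub (integrable_eval ν h S) (integrable_eval ν h T)

lemma Lint_Cmul (ν : Measure ℝ) (c : ℂ) (S : Polynomial ℂ) :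
    Lint ν (Polynomial.C c * S) = c * Lint ν S := by
  unfold Lint
  simp only [Polynomial.eval_mul, Polynomial.eval_C]
  rw [← smul_eq_mul, ← integral_smul]
  simp [smul_eq_mul]

lemma int_one_eq (ν : Measure ℝ) (S : Polynomial ℂ) (k : ℕ) :
    (∫ x : ℝ, S.eval (x : ℂ) * (x : ℂ) ^ k * (1 : ℂ) ∂ν) = Lint ν (S * X ^ k) := by
  unfold Lint
  congr 1
  funext x
  simp

lemma int_w_eq (z₀ : ℂ) (ν : Measure ℝ) (S : Polynomial ℂ) (k : ℕ) :
    (∫ x : ℝ, S.eval (x : ℂ) * (x : ℂ) ^ k * ((x : ℂ) - z₀) ^ 2 ∂ν) =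
      Lint ν ((X - C z₀) ^ 2 * S * X ^ k) := by
  unfold Lint
  congr 1
  funext x
  simp
  ring


/-- Interlacing criterion for type II polynomials: if `n` and `n + e_j` are normal, with
type II polynomials `Q = P_n` and `P = P_{n+e_j}`, then for `z₀ ∈ ℂ` the Wronskian
`W(P, Q; z₀) = P(z₀)Q'(z₀) - P'(z₀)Q(z₀)` vanishes iff `n` is not normal for the doubly
transformed system `((x-z₀)²μ₁, ..., (x-z₀)²μ_r)`. -/
theorem stmt14 (r : ℕ) (μ : Fin r → Measure ℝ)
    (hmom : ∀ j, ∀ k : ℕ, Integrable (fun x : ℝ => x ^ k) (μ j))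
    (n : Fin r → ℕ) (j : Fin r)
    (Q P : Polynomial ℂ)
    (hnormn : NormalII μ (fun _ _ => 1) n)
    (hnormnj : NormalII μ (fun _ _ => 1) (fun i => if i = j then n i + 1 else n i))
    (hQ : IsTypeII μ (fun _ _ => 1) n Q)
    (hP : IsTypeII μ (fun _ _ => 1) (fun i => if i = j then n i + 1 else n i) P)
    (z₀ : ℂ) :
    P.eval z₀ * (derivative Q).eval z₀ - (derivative P).eval z₀ * Q.eval z₀ = 0 ↔
      ¬ NormalII μ (fun _ x => ((x : ℂ) - z₀) ^ 2) n := by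
  classical
  set N := ∑ i, n i with hN
  -- degrees
  have hNQ : Q.natDegree = N := hQ.2.1
  have hNP : P.natDegree = N + 1 := by
    rw [hP.2.1]
    have : ∀ i : Fin r, (if i = j then n i + 1 else n i) = n i + (if i = j then 1 else 0) := by
      intro i; split <;> simp
    simp only [this, Finset.sum_add_distrib, Finset.sum_ite_eq', Finset.mem_univ, if_true]
    rfl
  have hdegQ : Q.degree = (N : ℕ) := by
    rw [Polynomial.degree_eq_natDegree hQ.1.ne_zero, hNQ]
  have hdegP : P.degree = ((N + 1 : ℕ) : WithBot ℕ) := by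
    rw [Polynomial.degree_eq_natDegree hP.1.ne_zero, hNP]
  -- orthogonality in Lint form
  have hKQ : ∀ i, ∀ k < n i, Lint (μ i) (Q * X ^ k) = 0 := by
    intro i k hk; rw [← int_one_eq]; exact hQ.2.2 i k hk
  have hKP : ∀ i, ∀ k < n i, Lint (μ i) (P * X ^ k) = 0 := by
    intro i k hk
    rw [← int_one_eq]
    refine hP.2.2 i k ?_
    dsimp only
    split <;> omega
  -- only the zero polynomial of degree < N satisfies the conditions
  have hsmall : ∀ S : Polynomial ℂ, S.degree < (N : ℕ) →
      (∀ i, ∀ k < n i, Lint (μ i) (S * X ^ k) = 0) → S = 0 := by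
    intro S hdeg hKS
    by_contra hS0
    have hlt : S.degree < Q.degree := hdegQ ▸ hdeg
    have hmono : (Q + S).Monic := hQ.1.add_of_left hlt
    have hdeg' : (Q + S).degree = (N : ℕ) := by
      rw [Polynomial.degree_add_eq_left_of_degree_lt hlt, hdegQ]
    have hT : IsTypeII μ (fun _ _ => 1) n (Q + S) := by
      refine ⟨hmono, Polynomial.natDegree_eq_of_degree_eq_some hdeg', ?_⟩
      intro i k hk
      rw [int_one_eq, add_mul, Lint_add (μ i) (hmom i), hKQ i k hk, hKS i k hk, add_zero]
    obtain ⟨P₀, _, hu⟩ := hnormn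
    have : Q + S = Q := (hu _ hT).trans (hu Q hQ).symm
    exact hS0 (by simpa using this)
  -- representation of degree ≤ N+1 solutions
  have hrepr : ∀ S : Polynomial ℂ, S.degree ≤ ((N + 1 : ℕ) : WithBot ℕ) →
      (∀ i, ∀ k < n i, Lint (μ i) (S * X ^ k) = 0) →
      ∃ a b : ℂ, S = C a * P + C b * Q := by
    intro S hdeg hKS
    set a := S.coeff (N + 1) with ha
    have hPc : P.coeff (N + 1) = 1 := by rw [← hNP]; exact hP.1.coeff_natDegree
    have hQc : Q.coeff N = 1 := by rw [← hNQ]; exact hQ.1.coeff_natDegree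
    have h1 : (S - C a * P).degree ≤ ((N : ℕ) : WithBot ℕ) := by
      rw [Polynomial.degree_le_iff_coeff_zero]
      intro m hm
      have hm' : N + 1 ≤ m := by exact_mod_cast Nat.succ_le_of_lt (by exact_mod_cast hm)
      rcases eq_or_lt_of_le hm' with h | h
      · rw [← h, Polynomial.coeff_sub, Polynomial.coeff_C_mul, hPc, mul_one, ← ha, sub_self]
      · have hS : S.coeff m = 0 :=
          Polynomial.coeff_eq_zero_of_degree_lt (lt_of_le_of_lt hdeg (by exact_mod_cast h))
        have hPm : P.coeff m = 0 :=
          Polynomial.coeff_eq_zero_of_degree_lt (hdegP ▸ (by exact_mod_cast h))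
        simp [Polynomial.coeff_sub, Polynomial.coeff_C_mul, hS, hPm]
    set b := (S - C a * P).coeff N with hb
    have h2 : (S - C a * P - C b * Q).degree < ((N : ℕ) : WithBot ℕ) := by
      rw [Polynomial.degree_lt_iff_coeff_zero]
      intro m hm
      rcases eq_or_lt_of_le hm with h | h
      · rw [← h, Polynomial.coeff_sub, Polynomial.coeff_C_mul, hQc, mul_one, ← hb, sub_self]
      · have h1m : (S - C a * P).coeff m = 0 :=
          Polynomial.coeff_eq_zero_of_degree_lt (lt_of_le_of_lt h1 (by exact_mod_cast h))
        have hQm : Q.coeff m = 0 :=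
          Polynomial.coeff_eq_zero_of_degree_lt (hdegQ ▸ (by exact_mod_cast h))
        simp [Polynomial.coeff_sub, Polynomial.coeff_C_mul, h1m, hQm]
    have hK2 : ∀ i, ∀ k < n i, Lint (μ i) ((S - C a * P - C b * Q) * X ^ k) = 0 := by
      intro i k hk
      rw [sub_mul, sub_mul, Lint_sub (μ i) (hmom i), Lint_sub (μ i) (hmom i),
        mul_assoc (C a), mul_assoc (C b), Lint_Cmul, Lint_Cmul,
        hKS i k hk, hKP i k hk, hKQ i k hk]
      ring
    have h0 := hsmall _ h2 hK2
    refine ⟨a, b, ?_⟩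
    rw [sub_sub, sub_eq_zero] at h0
    exact h0
  -- independence of P, Q
  have hPQzero : ∀ a b : ℂ, C a * P + C b * Q = 0 → a = 0 ∧ b = 0 := by
    intro a b hab
    have hPc : P.coeff (N + 1) = 1 := by rw [← hNP]; exact hP.1.coeff_natDegree
    have hQc : Q.coeff N = 1 := by rw [← hNQ]; exact hQ.1.coeff_natDegree
    have hQtop : Q.coeff (N + 1) = 0 :=
      Polynomial.coeff_eq_zero_of_degree_lt (hdegQ ▸ (by exact_mod_cast Nat.lt_succ_self N))
    have ha : a = 0 := by
      have := congrArg (fun p => Polynomial.coeff p (N + 1)) hab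
      simpa [Polynomial.coeff_add, Polynomial.coeff_C_mul, hPc, hQtop] using this
    subst ha
    have hb : b = 0 := by
      have := congrArg (fun p => Polynomial.coeff p N) hab
      simpa [Polynomial.coeff_add, Polynomial.coeff_C_mul, hQc] using this
    exact ⟨rfl, hb⟩
  -- translation of transformed type II
  have htrans : ∀ R : Polynomial ℂ, IsTypeII μ (fun _ x => ((x : ℂ) - z₀) ^ 2) n R ↔
      (R.Monic ∧ R.natDegree = N ∧
        ∀ i, ∀ k < n i, Lint (μ i) ((X - C z₀) ^ 2 * R * X ^ k) = 0) := by
    intro R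
    unfold IsTypeII
    constructor
    · rintro ⟨h1, h2, h3⟩
      exact ⟨h1, h2, fun i k hk => by rw [← int_w_eq]; exact h3 i k hk⟩
    · rintro ⟨h1, h2, h3⟩
      exact ⟨h1, h2, fun i k hk => by rw [int_w_eq]; exact h3 i k hk⟩
  -- double-root helper facts
  have hdeg2 : ∀ D : Polynomial ℂ, D.degree < (N : ℕ) →
      ((X - C z₀) ^ 2 * D).degree ≤ ((N + 1 : ℕ) : WithBot ℕ) := by
    intro D hD
    rcases eq_or_ne D 0 with h | h
    · simp [h]
    · rw [Polynomial.degree_mul]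
      have h2 : ((X - C z₀) ^ 2 : Polynomial ℂ).degree = 2 := by
        rw [Polynomial.degree_pow, Polynomial.degree_X_sub_C]; rfl
      rw [Polynomial.degree_eq_natDegree h] at hD
      have hD' : D.natDegree < N := by exact_mod_cast hD
      rw [h2, Polynomial.degree_eq_natDegree h]
      have : ((2 + D.natDegree : ℕ) : WithBot ℕ) ≤ ((N + 1 : ℕ) : WithBot ℕ) := by
        exact_mod_cast (by omega : 2 + D.natDegree ≤ N + 1)
      exact_mod_cast this
  have hdeg3 : ∀ D : Polynomial ℂ, D ≠ 0 →
      ((X - C z₀) ^ 2 * D).degree ≤ ((N + 1 : ℕ) : WithBot ℕ) → D.degree < (N : ℕ) := by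
    intro D h hle
    rw [Polynomial.degree_mul] at hle
    have h2 : ((X - C z₀) ^ 2 : Polynomial ℂ).degree = 2 := by
      rw [Polynomial.degree_pow, Polynomial.degree_X_sub_C]; rfl
    rw [h2, Polynomial.degree_eq_natDegree h] at hle
    have h' : ((2 + D.natDegree : ℕ) : WithBot ℕ) ≤ ((N + 1 : ℕ) : WithBot ℕ) := by
      exact_mod_cast hle
    have h'' : 2 + D.natDegree ≤ N + 1 := by exact_mod_cast h'
    rw [Polynomial.degree_eq_natDegree h]
    exact_mod_cast (by omega : D.natDegree < N)
  have hev2 : ∀ D : Polynomial ℂ, ((X - C z₀) ^ 2 * D).eval z₀ = 0 := by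
    intro D; simp
  have hev2' : ∀ D : Polynomial ℂ, (derivative ((X - C z₀) ^ 2 * D)).eval z₀ = 0 := by
    intro D
    simp [Polynomial.derivative_mul, Polynomial.derivative_pow]
  constructor
  · -- Wronskian zero → not normal
    intro hW hnorm
    have hex : ∃ a b : ℂ, ¬(a = 0 ∧ b = 0) ∧ (C a * P + C b * Q).eval z₀ = 0 ∧
        (derivative (C a * P + C b * Q)).eval z₀ = 0 := by
      by_cases h1 : (derivative Q).eval z₀ = 0 ∧ (derivative P).eval z₀ = 0
      · by_cases h2 : Q.eval z₀ = 0 ∧ P.eval z₀ = 0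
        · exact ⟨0, 1, by norm_num, by simp [h2.1], by simp [h1.1]⟩
        · refine ⟨Q.eval z₀, -(P.eval z₀), ?_, ?_, ?_⟩
          · rintro ⟨ha, hb⟩; exact h2 ⟨ha, by simpa using hb⟩
          · simp; ring
          · simp [Polynomial.derivative_add, Polynomial.derivative_C_mul, h1.1, h1.2]
      · refine ⟨(derivative Q).eval z₀, -((derivative P).eval z₀), ?_, ?_, ?_⟩
        · rintro ⟨ha, hb⟩; exact h1 ⟨ha, by simpa using hb⟩
        · simp; linear_combination hW
        · simp [Polynomial.derivative_add, Polynomial.derivative_C_mul]; ring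
    obtain ⟨a, b, hab0, hev, hev'⟩ := hex
    set S := C a * P + C b * Q with hS
    have hSne : S ≠ 0 := fun h => hab0 (hPQzero a b h)
    obtain ⟨T, hT⟩ := Polynomial.dvd_iff_isRoot.mpr hev
    have hTroot : T.eval z₀ = 0 := by
      have h := hev'
      rw [hT] at h
      simpa [Polynomial.derivative_mul] using h
    obtain ⟨R, hR⟩ := Polynomial.dvd_iff_isRoot.mpr hTroot
    have hSR : S = (X - C z₀) ^ 2 * R := by rw [hT, hR]; ring
    have hRne : R ≠ 0 := by intro h; apply hSne; rw [hSR, h, mul_zero]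
    have hdegS : S.degree ≤ ((N + 1 : ℕ) : WithBot ℕ) := by
      rw [hS]
      refine le_trans (Polynomial.degree_add_le _ _) (max_le ?_ ?_)
      · calc (C a * P).degree ≤ (C a).degree + P.degree := Polynomial.degree_mul_le _ _
          _ ≤ 0 + ((N + 1 : ℕ) : WithBot ℕ) := add_le_add Polynomial.degree_C_le (le_of_eq hdegP)
          _ = ((N + 1 : ℕ) : WithBot ℕ) := zero_add _
      · calc (C b * Q).degree ≤ (C b).degree + Q.degree := Polynomial.degree_mul_le _ _
          _ ≤ 0 + ((N : ℕ) : WithBot ℕ) := add_le_add Polynomial.degree_C_le (le_of_eq hdegQ)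
          _ ≤ ((N + 1 : ℕ) : WithBot ℕ) := by
              rw [zero_add]; exact_mod_cast (by omega : N ≤ N + 1)
    have hdegR : R.degree < (N : ℕ) := hdeg3 R hRne (hSR ▸ hdegS)
    have hKS : ∀ i, ∀ k < n i, Lint (μ i) (S * X ^ k) = 0 := by
      intro i k hk
      rw [hS, add_mul, Lint_add _ (hmom i), mul_assoc, mul_assoc, Lint_Cmul, Lint_Cmul,
        hKP i k hk, hKQ i k hk]
      ring
    obtain ⟨R₀, hR₀, hu⟩ := hnorm
    have hR₀' := (htrans R₀).mp hR₀
    have hdegR₀ : R₀.degree = (N : ℕ) := by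
      rw [Polynomial.degree_eq_natDegree hR₀'.1.ne_zero, hR₀'.2.1]
    have hlt : R.degree < R₀.degree := hdegR₀ ▸ hdegR
    have hnew : IsTypeII μ (fun _ x => ((x : ℂ) - z₀) ^ 2) n (R₀ + R) := by
      rw [htrans]
      refine ⟨hR₀'.1.add_of_left hlt, Polynomial.natDegree_eq_of_degree_eq_some
        (by rw [Polynomial.degree_add_eq_left_of_degree_lt hlt, hdegR₀]), ?_⟩
      intro i k hk
      have heq : (X - C z₀) ^ 2 * (R₀ + R) * X ^ k =
          (X - C z₀) ^ 2 * R₀ * X ^ k + S * X ^ k := by rw [hSR]; ring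
      rw [heq, Lint_add _ (hmom i), hR₀'.2.2 i k hk, hKS i k hk, add_zero]
    have : R₀ + R = R₀ := (hu _ hnew).trans (hu _ hR₀).symm
    exact hRne (by simpa using this)
  · -- not normal → Wronskian zero (contrapositive)
    intro hnn
    by_contra hW
    apply hnn
    -- key vanishing lemma
    have hkey : ∀ S : Polynomial ℂ, S.degree ≤ ((N + 1 : ℕ) : WithBot ℕ) →
        (∀ i, ∀ k < n i, Lint (μ i) (S * X ^ k) = 0) →
        S.eval z₀ = 0 → (derivative S).eval z₀ = 0 → S = 0 := by
      intro S hdeg hKS he he'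
      obtain ⟨a, b, hab⟩ := hrepr S hdeg hKS
      have e1 : a * P.eval z₀ + b * Q.eval z₀ = 0 := by
        have := he; rw [hab] at this; simpa using this
      have e2 : a * (derivative P).eval z₀ + b * (derivative Q).eval z₀ = 0 := by
        have := he'; rw [hab] at this
        simpa [Polynomial.derivative_add, Polynomial.derivative_C_mul] using this
      have ha : a = 0 := by
        by_contra ha0
        apply hW
        have h0 : a * (P.eval z₀ * (derivative Q).eval z₀ -
            (derivative P).eval z₀ * Q.eval z₀) = 0 := by
          linear_combination (derivative Q).eval z₀ * e1 - Q.eval z₀ * e2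
        exact (mul_eq_zero.mp h0).resolve_left ha0
      have hb : b = 0 := by
        by_contra hb0
        apply hW
        have h0 : b * (P.eval z₀ * (derivative Q).eval z₀ -
            (derivative P).eval z₀ * Q.eval z₀) = 0 := by
          linear_combination P.eval z₀ * e2 - (derivative P).eval z₀ * e1
        exact (mul_eq_zero.mp h0).resolve_left hb0
      rw [hab, ha, hb]; simp
    have hXz : ((X - C z₀) ^ 2 : Polynomial ℂ) ≠ 0 :=
      pow_ne_zero _ (Polynomial.X_sub_C_ne_zero z₀)
    -- the linear map
    let Φ : Polynomial.degreeLT ℂ N →ₗ[ℂ] (∀ i : Fin r, Fin (n i) → ℂ) :=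
      { toFun := fun S => fun i k => Lint (μ i) ((X - C z₀) ^ 2 * (S : Polynomial ℂ) * X ^ (k : ℕ))
        map_add' := by
          intro S T
          funext i k
          have heq : (X - C z₀) ^ 2 * ((S : Polynomial ℂ) + (T : Polynomial ℂ)) * X ^ (k : ℕ) =
              (X - C z₀) ^ 2 * (S : Polynomial ℂ) * X ^ (k : ℕ) +
              (X - C z₀) ^ 2 * (T : Polynomial ℂ) * X ^ (k : ℕ) := by ring
          simp only [Submodule.coe_add, Pi.add_apply]
          rw [heq, Lint_add _ (hmom i)]
        map_smul' := by
          intro c S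
          funext i k
          have heq : (X - C z₀) ^ 2 * (C c * (S : Polynomial ℂ)) * X ^ (k : ℕ) =
              C c * ((X - C z₀) ^ 2 * (S : Polynomial ℂ) * X ^ (k : ℕ)) := by ring
          simp only [SetLike.val_smul, Polynomial.smul_eq_C_mul, RingHom.id_apply,
            Pi.smul_apply, smul_eq_mul]
          rw [heq, Lint_Cmul] }
    have hinj : Function.Injective Φ := by
      rw [injective_iff_map_eq_zero]
      intro S hS0
      have hSdeg : (S : Polynomial ℂ).degree < (N : ℕ) := Polynomial.mem_degreeLT.mp S.2
      have hWK : ∀ i, ∀ k < n i,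
          Lint (μ i) (((X - C z₀) ^ 2 * (S : Polynomial ℂ)) * X ^ k) = 0 := by
        intro i k hk
        have := congrFun (congrFun hS0 i) ⟨k, hk⟩
        exact this
      have h0 : (X - C z₀) ^ 2 * (S : Polynomial ℂ) = 0 :=
        hkey _ (hdeg2 _ hSdeg) hWK (hev2 _) (hev2' _)
      have : (S : Polynomial ℂ) = 0 := by
        rcases mul_eq_zero.mp h0 with h | h
        · exact absurd h hXz
        · exact h
      exact Subtype.ext this
    have hfinV : Module.Finite ℂ (Polynomial.degreeLT ℂ N) :=
      Module.Finite.equiv (Polynomial.degreeLTEquiv ℂ N).symm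
    have hrankV : Module.finrank ℂ (Polynomial.degreeLT ℂ N) = N := by
      rw [(Polynomial.degreeLTEquiv ℂ N).finrank_eq]
      simp
    have hrankT : Module.finrank ℂ (∀ i : Fin r, Fin (n i) → ℂ) = N := by
      rw [Module.finrank_pi_fintype]
      simp [hN]
    have hsurj : Function.Surjective Φ := by
      have h1 : Module.finrank ℂ (LinearMap.range Φ) =
          Module.finrank ℂ (∀ i : Fin r, Fin (n i) → ℂ) := by
        rw [LinearMap.finrank_range_of_inj hinj, hrankV, hrankT]
      exact LinearMap.range_eq_top.mp (Submodule.eq_top_of_finrank_eq h1)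
    obtain ⟨S, hSeq⟩ := hsurj (fun i k =>
      - Lint (μ i) ((X - C z₀) ^ 2 * X ^ N * X ^ (k : ℕ)))
    set R := X ^ N + (S : Polynomial ℂ) with hRdef
    have hSdeg : (S : Polynomial ℂ).degree < (N : ℕ) := Polynomial.mem_degreeLT.mp S.2
    have hlt : (S : Polynomial ℂ).degree < (X ^ N : Polynomial ℂ).degree := by
      rw [Polynomial.degree_X_pow]; exact hSdeg
    have hmono : R.Monic := (Polynomial.monic_X_pow N).add_of_left hlt
    have hdegR : R.degree = (N : ℕ) := by
      rw [hRdef, Polynomial.degree_add_eq_left_of_degree_lt hlt, Polynomial.degree_X_pow]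
    have hRII : IsTypeII μ (fun _ x => ((x : ℂ) - z₀) ^ 2) n R := by
      rw [htrans]
      refine ⟨hmono, Polynomial.natDegree_eq_of_degree_eq_some hdegR, ?_⟩
      intro i k hk
      have hc := congrFun (congrFun hSeq i) ⟨k, hk⟩
      have heq : (X - C z₀) ^ 2 * R * X ^ k =
          (X - C z₀) ^ 2 * X ^ N * X ^ k + (X - C z₀) ^ 2 * (S : Polynomial ℂ) * X ^ k := by
        rw [hRdef]; ring
      rw [heq, Lint_add _ (hmom i)]
      have hc' : Lint (μ i) ((X - C z₀) ^ 2 * (S : Polynomial ℂ) * X ^ k) =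
          - Lint (μ i) ((X - C z₀) ^ 2 * X ^ N * X ^ k) := hc
      rw [hc']
      ring
    refine ⟨R, hRII, ?_⟩
    intro R' hR'
    have hR'' := (htrans R').mp hR'
    have hRR := (htrans R).mp hRII
    by_contra hne
    have hDne : R' - R ≠ 0 := sub_ne_zero.mpr (fun h => hne h)
    have hdegR' : R'.degree = ((N : ℕ) : WithBot ℕ) := by
      rw [Polynomial.degree_eq_natDegree hR''.1.ne_zero, hR''.2.1]
    have hdegD : (R' - R).degree < (N : ℕ) := by
      have h3 : R'.leadingCoeff = R.leadingCoeff := by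
        rw [hR''.1.leadingCoeff, hRR.1.leadingCoeff]
      have := Polynomial.degree_sub_lt (p := R') (q := R)
        (hdegR'.trans hdegR.symm) hR''.1.ne_zero h3
      rw [hdegR'] at this
      exact this
    have hKD : ∀ i, ∀ k < n i,
        Lint (μ i) (((X - C z₀) ^ 2 * (R' - R)) * X ^ k) = 0 := by
      intro i k hk
      have heq : ((X - C z₀) ^ 2 * (R' - R)) * X ^ k =
          (X - C z₀) ^ 2 * R' * X ^ k - (X - C z₀) ^ 2 * R * X ^ k := by ring
      rw [heq, Lint_sub _ (hmom i), hR''.2.2 i k hk, hRR.2.2 i k hk, sub_zero]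
    have h0 : (X - C z₀) ^ 2 * (R' - R) = 0 :=
      hkey _ (hdeg2 _ hdegD) hKD (hev2 _) (hev2' _)
    rcases mul_eq_zero.mp h0 with h | h
    · exact hXz h
    · exact hDne h
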